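/- The cross product P₀ on ℝ⁷ determined by the G₂ 3-form Ω₀ satisfies the norm identity ‖P₀(u,v)‖² = ‖u‖²‖v‖² − g(u,v)² for all u, v ∈ ℝ⁷. -/
import Mathlib


open RealInnerProductSpace

/-- The coordinate 3-form `xⁱ ∧ xʲ ∧ xᵏ` evaluated on three vectors of `ℝ⁷`. -/
noncomputable def wedge3 (i j k : Fin 7) (u v w : EuclideanSpace ℝ (Fin 7)) : ℝ :=
  u i * v j * w k - u i * v k * w j - u j * v i * w k
    + u j * v k * w i + u k * v i * w j - u k * v j * w i

/-- The standard `G₂` 3-form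
`Ω₀ = x¹²⁷ + x¹³⁶ + x¹⁴⁵ + x²³⁵ − x²⁴⁶ + x³⁴⁷ + x⁵⁶⁷` on `ℝ⁷`
(with coordinates indexed by `0,…,6`). -/
noncomputable def Omega0 (u v w : EuclideanSpace ℝ (Fin 7)) : ℝ :=
  wedge3 0 1 6 u v w + wedge3 0 2 5 u v w + wedge3 0 3 4 u v w
    + wedge3 1 2 4 u v w - wedge3 1 3 5 u v w + wedge3 2 3 6 u v w
    + wedge3 4 5 6 u v w

set_option maxHeartbeats 1000000 in
/-- the cross product `P₀` determined by `Ω₀` satisfies the norm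
identity `‖P₀ u v‖² = ‖u‖²‖v‖² − ⟪u,v⟫²`. -/
theorem crossProduct_norm
    (P₀ : EuclideanSpace ℝ (Fin 7) → EuclideanSpace ℝ (Fin 7) → EuclideanSpace ℝ (Fin 7))
    (hP : ∀ u v w, ⟪P₀ u v, w⟫ = Omega0 u v w) :
    ∀ u v, ‖P₀ u v‖ ^ 2 = ‖u‖ ^ 2 * ‖v‖ ^ 2 - ⟪u, v⟫ ^ 2 := by
  intro u v
  have key : ∀ i : Fin 7, P₀ u v i = Omega0 u v (EuclideanSpace.single i 1) := by
    intro i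
    have h := hP u v (EuclideanSpace.single i 1)
    rw [EuclideanSpace.inner_single_right] at h
    simpa using h
  have k0 : P₀ u v 0 = Omega0 u v (EuclideanSpace.single 0 1) := key 0
  rw [Omega0] at k0
  simp only [wedge3, EuclideanSpace.single_apply] at k0
  simp +decide only [if_true, if_false, mul_one, mul_zero, add_zero, zero_add, sub_zero, zero_sub, neg_neg, neg_add_rev] at k0
  have k1 : P₀ u v 1 = Omega0 u v (EuclideanSpace.single 1 1) := key 1
  rw [Omega0] at k1
  simp only [wedge3, EuclideanSpace.single_apply] at k1
  simp +decide only [if_true, if_false, mul_one, mul_zero, add_zero, zero_add, sub_zero, zero_sub, neg_neg, neg_add_rev] at k1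
  have k2 : P₀ u v 2 = Omega0 u v (EuclideanSpace.single 2 1) := key 2
  rw [Omega0] at k2
  simp only [wedge3, EuclideanSpace.single_apply] at k2
  simp +decide only [if_true, if_false, mul_one, mul_zero, add_zero, zero_add, sub_zero, zero_sub, neg_neg, neg_add_rev] at k2
  have k3 : P₀ u v 3 = Omega0 u v (EuclideanSpace.single 3 1) := key 3
  rw [Omega0] at k3
  simp only [wedge3, EuclideanSpace.single_apply] at k3
  simp +decide only [if_true, if_false, mul_one, mul_zero, add_zero, zero_add, sub_zero, zero_sub, neg_neg, neg_add_rev] at k3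
  have k4 : P₀ u v 4 = Omega0 u v (EuclideanSpace.single 4 1) := key 4
  rw [Omega0] at k4
  simp only [wedge3, EuclideanSpace.single_apply] at k4
  simp +decide only [if_true, if_false, mul_one, mul_zero, add_zero, zero_add, sub_zero, zero_sub, neg_neg, neg_add_rev] at k4
  have k5 : P₀ u v 5 = Omega0 u v (EuclideanSpace.single 5 1) := key 5
  rw [Omega0] at k5
  simp only [wedge3, EuclideanSpace.single_apply] at k5
  simp +decide only [if_true, if_false, mul_one, mul_zero, add_zero, zero_add, sub_zero, zero_sub, neg_neg, neg_add_rev] at k5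
  have k6 : P₀ u v 6 = Omega0 u v (EuclideanSpace.single 6 1) := key 6
  rw [Omega0] at k6
  simp only [wedge3, EuclideanSpace.single_apply] at k6
  simp +decide only [if_true, if_false, mul_one, mul_zero, add_zero, zero_add, sub_zero, zero_sub, neg_neg, neg_add_rev] at k6
  rw [← real_inner_self_eq_norm_sq, ← real_inner_self_eq_norm_sq,
    ← real_inner_self_eq_norm_sq]
  simp only [PiLp.inner_apply, RCLike.inner_apply, conj_trivial, Fin.sum_univ_seven,
    k0, k1, k2, k3, k4, k5, k6]
  ring
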